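/- No short false positives: let G' be an order-k pruned de Bruijn graph of graph G (i.e., a path graph k-equivalent to the order-k de Bruijn graph of G) and let X be a pattern over Σ \ {#, $} with 1 ≤ |X| ≤ k. Then every node v ∈ locate(X) is the start node of a path in G whose label is X. -/

import Mathlib

open List

/-- Two strings prefix-match if one is a prefix of the other. -/
def PrefixMatch {α : Type*} (s t : List α) : Prop := s <+: t ∨ t <+: s

/-- A set of strings is prefix-free if no two distinct members prefix-match. -/
def PrefixFree {α : Type*} (K : Set (List α)) : Prop :=
  ∀ s ∈ K, ∀ t ∈ K, s ≠ t → ¬ PrefixMatch s t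

/-- String `K` occurs at position `i` of the annotated sequence `s`
(an element of a `k`-collection, pairing each character with the graph node
at that position). -/
def OccAt {α ν : Type*} (s : List (α × ν)) (i : ℕ) (K : List α) : Prop :=
  i + K.length ≤ s.length ∧ ((s.drop i).take K.length).map Prod.fst = K

/-- An order-`k` path graph built from a `k`-collection `seqs` of annotated
sequences (labels of maximal paths, padded with `#^k` in front and `$^k`
behind, each position annotated with the corresponding node), together with a
prefix-free key set `keys` of substrings of length at most `k` such that every
right-maximal substring of the collection prefix-matches some key and
`$^k` is a key. -/
structure PathGraph (α ν : Type*) (k : ℕ) (hash dollar : α) where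
  seqs : Set (List (α × ν))
  keys : Set (List α)
  key_nonempty : ∀ K ∈ keys, K ≠ []
  key_short : ∀ K ∈ keys, K.length ≤ k
  prefixFree : PrefixFree keys
  keys_occur : ∀ K ∈ keys, ∃ s ∈ seqs, ∃ i, OccAt s i K
  suffixes_covered : ∀ s ∈ seqs, ∀ i < s.length,
      ∃ K ∈ keys, PrefixMatch K ((s.drop i).map Prod.fst)
  dollar_key : List.replicate k dollar ∈ keys
  begins_hash : ∀ s ∈ seqs, (s.map Prod.fst).take k = List.replicate k hash
  ends_dollar : ∀ s ∈ seqs,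
      (s.map Prod.fst).drop (s.length - k) = List.replicate k dollar
  no_other_special : ∀ s ∈ seqs, ∀ i, k ≤ i → i < s.length - k →
      ∀ h : i < s.length, (s.get ⟨i, h⟩).1 ≠ hash ∧ (s.get ⟨i, h⟩).1 ≠ dollar

namespace PathGraph

variable {α ν : Type*} [Inhabited α] {k : ℕ} {hash dollar : α}

/-- The value set of a key: the nodes at positions where the key occurs. -/
def value (G : PathGraph α ν k hash dollar) (K : List α) : Set ν :=
  { v | ∃ s ∈ G.seqs, ∃ i, OccAt s i K ∧ ∃ h : i < s.length, (s.get ⟨i, h⟩).2 = v }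

/-- Edges of the path graph: `(K, K')` is an edge when the string
`K[0]·K'` occurs in the collection and prefix-matches `K`. -/
def Edge (G : PathGraph α ν k hash dollar) (K K' : List α) : Prop :=
  K ∈ G.keys ∧ K' ∈ G.keys ∧
  (∃ s ∈ G.seqs, ∃ i, OccAt s i (K.headI :: K')) ∧
  PrefixMatch K (K.headI :: K')

/-- `find X`: the set of keys that are start nodes of paths of the path graph
whose label (concatenation of first characters of the keys) is `X`. -/
def find (G : PathGraph α ν k hash dollar) (X : List α) : Set (List α) :=
  { K | ∃ P : List (List α), P.Chain' G.Edge ∧ (∀ K' ∈ P, K' ∈ G.keys) ∧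
      P.map (fun K' => K'.headI) = X ∧ P.headI = K }

/-- `locate X`: the union of the value sets of the keys matching `X`. -/
def locate (G : PathGraph α ν k hash dollar) (X : List α) : Set ν :=
  ⋃ K ∈ G.find X, G.value K

/-- A path graph is the order-`k` de Bruijn graph of its collection when its
keys are exactly the `k`-mers occurring in the collection. -/
def IsDeBruijn (G : PathGraph α ν k hash dollar) : Prop :=
  G.keys = { K | K.length = k ∧ ∃ s ∈ G.seqs, ∃ i, OccAt s i K }

/-- Two path graphs are `k`-equivalent if `locate` agrees on all patterns of
length between `1` and `k` over `Σ \ {#, $}`. -/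
def KEquiv (G G' : PathGraph α ν k hash dollar) : Prop :=
  ∀ X : List α, X ≠ [] → X.length ≤ k →
    (∀ c ∈ X, c ≠ hash ∧ c ≠ dollar) → G.locate X = G'.locate X

/-- An order-`k` pruned de Bruijn graph: a path graph `k`-equivalent to the
order-`k` de Bruijn graph of the same collection. -/
def IsPrunedDeBruijn (G : PathGraph α ν k hash dollar) : Prop :=
  ∃ D : PathGraph α ν k hash dollar,
    D.seqs = G.seqs ∧ D.IsDeBruijn ∧ G.KEquiv D

/-- The pruning lemma is applicable: there is a nonempty string `K` that is a
proper prefix of at least one key, such that all keys having `K` as a proper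
prefix have identical value sets. -/
def CanPrune (G : PathGraph α ν k hash dollar) : Prop :=
  ∃ K : List α, K ≠ [] ∧
    (∃ K' ∈ G.keys, K <+: K' ∧ K ≠ K') ∧
    (∀ K₁ ∈ G.keys, K <+: K₁ → K ≠ K₁ →
      ∀ K₂ ∈ G.keys, K <+: K₂ → K ≠ K₂ → G.value K₁ = G.value K₂)

/-- A maximally pruned de Bruijn graph: a pruned de Bruijn graph to which the
pruning lemma cannot be applied any further. -/
def MaximallyPruned (G : PathGraph α ν k hash dollar) : Prop :=
  G.IsPrunedDeBruijn ∧ ¬ G.CanPrune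

end PathGraph

/-- In a de Bruijn graph, the label of a path prefix-matches the first key. -/
lemma chain_prefix {α ν : Type*} [Inhabited α] {k : ℕ} {hash dollar : α}
    (D : PathGraph α ν k hash dollar) (hDB : D.IsDeBruijn) :
    ∀ P : List (List α), P.Chain' D.Edge → (∀ K ∈ P, K ∈ D.keys) → P ≠ [] →
      PrefixMatch (P.map (fun K => K.headI)) P.headI := by
  intro P
  induction P with
  | nil => simp
  | cons K rest ih =>
    intro hch hk _
    cases rest with
    | nil =>
      left
      have hK : K ∈ D.keys := hk K (by simp)
      have hne : K ≠ [] := D.key_nonempty K hK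
      obtain ⟨c, t, rfl⟩ := List.exists_cons_of_ne_nil hne
      simp [List.headI]
    | cons K' rest' =>
      have hedge : D.Edge K K' := (List.isChain_cons_cons.mp hch).1
      have hch' := (List.isChain_cons_cons.mp hch).2
      have hk' : ∀ L ∈ K' :: rest', L ∈ D.keys := fun L hL => hk L (by simp [hL])
      have IH := ih hch' hk' (by simp)
      have hKlen : K.length = k := by
        have := hk K (by simp); rw [hDB] at this; exact this.1
      have hK'len : K'.length = k := by
        have := hk' K' (by simp); rw [hDB] at this; exact this.1
      have hKpre : K <+: (K.headI :: K') := by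
        rcases hedge.2.2.2 with h | h
        · exact h
        · exact absurd h.length_le (by simp [hKlen, hK'len])
      simp only [List.map_cons, List.headI] at IH ⊢
      rcases IH with h | h
      · have h2 : (K.headI :: K'.headI :: (rest'.map (fun K => K.headI))) <+:
            (K.headI :: K') := List.cons_prefix_cons.mpr ⟨rfl, h⟩
        exact List.prefix_or_prefix_of_prefix h2 hKpre
      · right
        exact hKpre.trans (List.cons_prefix_cons.mpr ⟨rfl, h⟩)

/-- Path construction: an occurrence of a pattern over `Σ \ {#, $}` in a
sequence yields a path of the underlying graph. -/
lemma build_path {α ν V : Type*} [Inhabited α] [Inhabited V] {k : ℕ}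
    {hash dollar : α}
    (G' : PathGraph α ν k hash dollar)
    (lab : V → α) (E : V → V → Prop) (emb : V → ν)
    (hemb : Function.Injective emb)
    (hseq : ∀ s ∈ G'.seqs, ∀ (i : ℕ) (h : i < s.length),
      (s.get ⟨i, h⟩).1 ≠ hash → (s.get ⟨i, h⟩).1 ≠ dollar →
      ∃ v : V, emb v = (s.get ⟨i, h⟩).2 ∧ lab v = (s.get ⟨i, h⟩).1 ∧
        ∀ h' : i + 1 < s.length, (s.get ⟨i + 1, h'⟩).1 ≠ dollar →
          ∃ w : V, emb w = (s.get ⟨i + 1, h'⟩).2 ∧ E v w) :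
    ∀ (X : List α) (s : List (α × ν)), s ∈ G'.seqs → ∀ i : ℕ, OccAt s i X →
      (∀ c ∈ X, c ≠ hash ∧ c ≠ dollar) →
      ∃ P : List V, P.Chain' E ∧ P.map lab = X ∧
        (X ≠ [] → ∃ h : i < s.length, emb P.headI = (s.get ⟨i, h⟩).2) := by
  intro X
  induction X with
  | nil => intro s hs i _ _; exact ⟨[], List.isChain_nil, by simp, by simp⟩
  | cons c X' ihX =>
    intro s hs i hocc hch
    obtain ⟨hlen, heq⟩ := hocc
    have hi : i < s.length := by simp at hlen; omega
    have hdrop : s.drop i = s[i] :: s.drop (i + 1) :=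
      List.drop_eq_getElem_cons hi
    rw [hdrop] at heq
    simp only [List.length_cons, List.take_succ_cons, List.map_cons,
      List.cons.injEq] at heq
    obtain ⟨hc, hrest⟩ := heq
    have hocc' : OccAt s (i + 1) X' := by
      refine ⟨by simp at hlen ⊢; omega, hrest⟩
    have hchash : (s.get ⟨i, hi⟩).1 ≠ hash := by
      simp only [List.get_eq_getElem, hc]; exact (hch c (by simp)).1
    have hcdollar : (s.get ⟨i, hi⟩).1 ≠ dollar := by
      simp only [List.get_eq_getElem, hc]; exact (hch c (by simp)).2
    obtain ⟨v, hv, hvlab, hvedge⟩ := hseq s hs i hi hchash hcdollar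
    obtain ⟨P', hP'ch, hP'lab, hP'head⟩ :=
      ihX s hs (i + 1) hocc' (fun d hd => hch d (by simp [hd]))
    cases X' with
    | nil =>
      refine ⟨[v], List.isChain_singleton v, by simp [hvlab, hc], fun _ => ⟨hi, by simpa using hv⟩⟩
    | cons c' X'' =>
      have hP'ne : P' ≠ [] := by
        intro h; rw [h] at hP'lab; simp at hP'lab
      obtain ⟨h1, hhead⟩ := hP'head (by simp)
      have hc' : (s.get ⟨i + 1, h1⟩).1 = c' := by
        obtain ⟨hlen', heq'⟩ := hocc'
        have hdrop' : s.drop (i + 1) = s[i + 1] :: s.drop (i + 2) :=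
          List.drop_eq_getElem_cons h1
        rw [hdrop'] at heq'
        simp only [List.length_cons, List.take_succ_cons, List.map_cons,
          List.cons.injEq] at heq'
        simpa using heq'.1
      have hc'dollar : (s.get ⟨i + 1, h1⟩).1 ≠ dollar := by
        rw [hc']; exact (hch c' (by simp)).2
      obtain ⟨w, hw, hEvw⟩ := hvedge h1 hc'dollar
      have hw' : w = P'.headI := hemb (by rw [hw, hhead])
      refine ⟨v :: P', ?_, by simp [hvlab, hc, hP'lab], fun _ => ⟨hi, by simpa using hv⟩⟩
      apply List.isChain_cons.mpr
      refine ⟨fun y hy => ?_, hP'ch⟩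
      obtain ⟨p, P'', rfl⟩ := List.exists_cons_of_ne_nil hP'ne
      simp only [List.head?_cons, Option.mem_def, Option.some.injEq] at hy
      subst hy
      rw [hw'] at hEvw
      simpa using hEvw

/-- **No short false positives** (Lemma 4): let `G'` be an order-`k` pruned
de Bruijn graph of a labeled graph `G = (V, E)` (the annotated sequences of the
collection follow, at their non-padding positions, nodes and edges of `G` via
the embedding `emb`), and let `X` be a pattern over `Σ \ {#, $}` with
`1 ≤ |X| ≤ k`. Then every element of `locate X` is (the embedding of) the
start node of a path of `G` labeled `X`. -/
theorem no_short_false_positives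
    {α ν V : Type*} [Inhabited α] [Inhabited V] {k : ℕ} {hash dollar : α}
    (G' : PathGraph α ν k hash dollar) (hG' : G'.IsPrunedDeBruijn)
    (lab : V → α) (E : V → V → Prop) (emb : V → ν)
    (hemb : Function.Injective emb)
    (hseq : ∀ s ∈ G'.seqs, ∀ (i : ℕ) (h : i < s.length),
      (s.get ⟨i, h⟩).1 ≠ hash → (s.get ⟨i, h⟩).1 ≠ dollar →
      ∃ v : V, emb v = (s.get ⟨i, h⟩).2 ∧ lab v = (s.get ⟨i, h⟩).1 ∧
        ∀ h' : i + 1 < s.length, (s.get ⟨i + 1, h'⟩).1 ≠ dollar →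
          ∃ w : V, emb w = (s.get ⟨i + 1, h'⟩).2 ∧ E v w)
    (X : List α) (hX1 : 1 ≤ X.length) (hXk : X.length ≤ k)
    (hXc : ∀ c ∈ X, c ≠ hash ∧ c ≠ dollar) :
    ∀ u ∈ G'.locate X, ∃ v : V, emb v = u ∧
      ∃ P : List V, P.Chain' E ∧ P.map lab = X ∧ P.headI = v := by
  intro u hu
  obtain ⟨D, hseqs, hDB, hequiv⟩ := hG'
  have hXne : X ≠ [] := by intro h; rw [h] at hX1; simp at hX1
  rw [hequiv X hXne hXk hXc] at hu
  simp only [PathGraph.locate, Set.mem_iUnion] at hu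
  obtain ⟨K, hKfind, hval⟩ := hu
  obtain ⟨P, hPch, hPkeys, hPlab, hPhead⟩ := hKfind
  have hPne : P ≠ [] := by intro h; rw [h] at hPlab; exact hXne hPlab.symm
  have hK : K ∈ D.keys := by
    obtain ⟨p, P'', rfl⟩ := List.exists_cons_of_ne_nil hPne
    exact hPhead ▸ hPkeys p (by simp)
  have hKlen : K.length = k := by rw [hDB] at hK; exact hK.1
  have hpm : PrefixMatch X K := by
    have := chain_prefix D hDB P hPch hPkeys hPne
    rwa [hPlab, hPhead] at this
  have hXK : X <+: K := by
    rcases hpm with h | h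
    · exact h
    · have : K = X := h.eq_of_length_le (by omega)
      rw [this]
  obtain ⟨s, hs, i, ⟨hlen, heq⟩, h, hnode⟩ := hval
  have hs' : s ∈ G'.seqs := hseqs ▸ hs
  have hoccX : OccAt s i X := by
    refine ⟨by have := hXK.length_le; omega, ?_⟩
    have : (s.drop i).take X.length = ((s.drop i).take K.length).take X.length := by
      rw [List.take_take, min_eq_left hXK.length_le]
    rw [this, List.map_take, heq]
    obtain ⟨t, rfl⟩ := hXK
    simp
  obtain ⟨P', hP'ch, hP'lab, hP'head⟩ :=
    build_path G' lab E emb hemb hseq X s hs' i hoccX hXc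
  obtain ⟨h', hP'emb⟩ := hP'head hXne
  refine ⟨P'.headI, ?_, P', hP'ch, hP'lab, rfl⟩
  rw [hP'emb]
  exact hnode
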